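/- arXiv:2007.04043 — 2 statements merged into one kernel-verified Lean document; each statement's English description precedes it below -/
import Mathlib

section
/- Let μ be a probability measure on a space Z, and let ℓ, r, g : Z → ℝ be measurable functions with 0 ≤ ℓ ≤ m for a constant m, and r, g square-integrable with respect to μ. Then (∫ ℓ·r dμ)² / 2 ≤ (∫ ℓ·g dμ)² + m² · ∫ (g − r)² dμ. -/
open MeasureTheory

section Aux

variable {Z : Type*} [MeasurableSpace Z] {μ : Measure Z}

lemma aux_inner_eq (f h : Z → ℝ) (hf : MemLp f 2 μ) (hh : MemLp h 2 μ) :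
    (inner ℝ (hf.toLp f) (hh.toLp h) : ℝ) = ∫ z, f z * h z ∂μ := by
  rw [L2.inner_def]
  refine integral_congr_ae ?_
  filter_upwards [hf.coeFn_toLp, hh.coeFn_toLp] with z hz1 hz2
  simp [RCLike.inner_apply, hz1, hz2, mul_comm]

lemma aux_integrable_mul (f h : Z → ℝ) (hf : MemLp f 2 μ) (hh : MemLp h 2 μ) :
    Integrable (fun z => f z * h z) μ := by
  have := L2.integrable_inner (𝕜 := ℝ) (hf.toLp f) (hh.toLp h)
  refine this.congr ?_
  filter_upwards [hf.coeFn_toLp, hh.coeFn_toLp] with z hz1 hz2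
  simp [RCLike.inner_apply, hz1, hz2, mul_comm]

lemma aux_cauchy_schwarz (f h : Z → ℝ) (hf : MemLp f 2 μ) (hh : MemLp h 2 μ) :
    (∫ z, f z * h z ∂μ) ^ 2 ≤ (∫ z, f z * f z ∂μ) * ∫ z, h z * h z ∂μ := by
  have := real_inner_mul_inner_self_le (hf.toLp f) (hh.toLp h)
  rw [aux_inner_eq f h hf hh, aux_inner_eq f f hf hf, aux_inner_eq h h hh hh] at this
  nlinarith [this]

end Aux

theorem stmt0 {Z : Type*} [MeasurableSpace Z] (μ : Measure Z) [IsProbabilityMeasure μ]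
    (ℓ r g : Z → ℝ) (m : ℝ)
    (hℓmeas : Measurable ℓ) (hrmeas : Measurable r) (hgmeas : Measurable g)
    (hℓ0 : ∀ z, 0 ≤ ℓ z) (hℓm : ∀ z, ℓ z ≤ m)
    (hr2 : MemLp r 2 μ) (hg2 : MemLp g 2 μ) :
    (∫ z, ℓ z * r z ∂μ) ^ 2 / 2 ≤
      (∫ z, ℓ z * g z ∂μ) ^ 2 + m ^ 2 * ∫ z, (g z - r z) ^ 2 ∂μ := by
  -- m is nonnegative
  have hZ : Nonempty Z := by
    by_contra h
    simp only [not_nonempty_iff] at h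
    have h1 : μ Set.univ = 1 := measure_univ
    simp [Set.univ_eq_empty_iff.mpr h] at h1
  obtain ⟨z0⟩ := hZ
  have hm0 : 0 ≤ m := le_trans (hℓ0 z0) (hℓm z0)
  -- ℓ is in L²
  have hℓ2 : MemLp ℓ 2 μ := by
    refine MemLp.of_bound hℓmeas.aestronglyMeasurable m ?_
    filter_upwards with z
    rw [Real.norm_eq_abs, abs_of_nonneg (hℓ0 z)]
    exact hℓm z
  have hgr2 : MemLp (fun z => g z - r z) 2 μ := hg2.sub hr2
  -- integrability facts
  have hint_lr := aux_integrable_mul ℓ r hℓ2 hr2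
  have hint_lg := aux_integrable_mul ℓ g hℓ2 hg2
  have hint_lgr := aux_integrable_mul ℓ (fun z => g z - r z) hℓ2 hgr2
  -- ∫ ℓr = ∫ ℓg - ∫ ℓ(g-r)
  have hsplit : ∫ z, ℓ z * r z ∂μ = (∫ z, ℓ z * g z ∂μ) - ∫ z, ℓ z * (g z - r z) ∂μ := by
    rw [← integral_sub hint_lg hint_lgr]
    refine integral_congr_ae ?_
    filter_upwards with z
    ring
  -- Cauchy–Schwarz on ℓ(g−r)
  have hCS := aux_cauchy_schwarz ℓ (fun z => g z - r z) hℓ2 hgr2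
  -- ∫ ℓ² ≤ m²
  have hℓℓ : ∫ z, ℓ z * ℓ z ∂μ ≤ m ^ 2 := by
    have : ∫ z, ℓ z * ℓ z ∂μ ≤ ∫ _z, m ^ 2 ∂μ := by
      refine integral_mono (aux_integrable_mul ℓ ℓ hℓ2 hℓ2) (integrable_const _) ?_
      intro z
      have h1 := hℓ0 z
      have h2 := hℓm z
      simp only
      nlinarith
    simpa using this
  -- (g−r)² integral rewriting
  have hsq : ∫ z, (fun z => g z - r z) z * (fun z => g z - r z) z ∂μ
      = ∫ z, (g z - r z) ^ 2 ∂μ := by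
    refine integral_congr_ae ?_
    filter_upwards with z
    ring
  have hsqnn : 0 ≤ ∫ z, (g z - r z) ^ 2 ∂μ :=
    integral_nonneg fun z => sq_nonneg _
  have hCS' : (∫ z, ℓ z * (g z - r z) ∂μ) ^ 2 ≤ m ^ 2 * ∫ z, (g z - r z) ^ 2 ∂μ := by
    rw [hsq] at hCS
    calc (∫ z, ℓ z * (g z - r z) ∂μ) ^ 2
        ≤ (∫ z, ℓ z * ℓ z ∂μ) * ∫ z, (g z - r z) ^ 2 ∂μ := hCS
      _ ≤ m ^ 2 * ∫ z, (g z - r z) ^ 2 ∂μ := mul_le_mul_of_nonneg_right hℓℓ hsqnn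
  rw [hsplit]
  nlinarith [sq_nonneg ((∫ z, ℓ z * g z ∂μ) + ∫ z, ℓ z * (g z - r z) ∂μ)]
end

section
/- Let μ be a probability measure, ℓ : Z → [0, m] measurable, and r ∈ L²(μ) the density ratio. For the choice g = r, the upper bound equals the squared importance-weighted risk: J(f, r) = (∫ ℓ·r dμ)², i.e., the second (distance) term vanishes and J(f, r) = R(f)² where R(f) = ∫ ℓ·r dμ. Hence inf over measurable g of J(f, g) satisfies (1/2)R(f)² ≤ inf_g J(f, g) ≤ R(f)². -/
open MeasureTheory
theorem stmt10 {Z : Type*} [MeasurableSpace Z] (μ : Measure Z) [IsProbabilityMeasure μ]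
    (ℓ r : Z → ℝ) (m : ℝ)
    (hℓmeas : Measurable ℓ) (hrmeas : Measurable r)
    (hℓ0 : ∀ z, 0 ≤ ℓ z) (hℓm : ∀ z, ℓ z ≤ m)
    (hr2 : MemLp r 2 μ) :
    let J : (Z → ℝ) → ℝ := fun g =>
      (∫ z, ℓ z * g z ∂μ) ^ 2 + m ^ 2 * ∫ z, (g z - r z) ^ 2 ∂μ
    let R : ℝ := ∫ z, ℓ z * r z ∂μ
    J r = R ^ 2 ∧
    (1 / 2) * R ^ 2 ≤ ⨅ g : {g : Z → ℝ // Measurable g ∧ MemLp g 2 μ}, J g.1 ∧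
    (⨅ g : {g : Z → ℝ // Measurable g ∧ MemLp g 2 μ}, J g.1) ≤ R ^ 2 := by
  intro J R
  have hZ : Nonempty Z := Measure.nonempty_of_neZero μ
  have hm : 0 ≤ m := le_trans (hℓ0 (Classical.arbitrary Z)) (hℓm _)
  have hbdd : ∃ C, ∀ x, ‖ℓ x‖ ≤ C :=
    ⟨m, fun z => by rw [Real.norm_eq_abs, abs_of_nonneg (hℓ0 z)]; exact hℓm z⟩
  have hint : ∀ h : Z → ℝ, MemLp h 2 μ → Integrable (fun z => ℓ z * h z) μ := fun h hh =>
    (hh.integrable one_le_two).bdd_mul hℓmeas.aestronglyMeasurable (Filter.Eventually.of_forall hbdd.choose_spec)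
  -- key inequality
  have key : ∀ h : Z → ℝ, MemLp h 2 μ →
      (∫ z, ℓ z * h z ∂μ) ^ 2 ≤ m ^ 2 * ∫ z, h z ^ 2 ∂μ := by
    intro h hh
    have h1 : Integrable (fun z => |h z|) μ := (hh.integrable one_le_two).abs
    have hI : (0:ℝ) ≤ ∫ z, h z ^ 2 ∂μ := integral_nonneg fun z => sq_nonneg _
    have hb : |∫ z, ℓ z * h z ∂μ| ≤ m * ∫ z, |h z| ∂μ := by
      calc |∫ z, ℓ z * h z ∂μ| ≤ ∫ z, |ℓ z * h z| ∂μ := by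
            simpa only [Real.norm_eq_abs] using
              norm_integral_le_integral_norm (μ := μ) (f := fun z => ℓ z * h z)
        _ ≤ ∫ z, m * |h z| ∂μ := by
            refine integral_mono (hint h hh).abs (h1.const_mul m) fun z => ?_
            rw [abs_mul, abs_of_nonneg (hℓ0 z)]
            exact mul_le_mul_of_nonneg_right (hℓm z) (abs_nonneg _)
        _ = m * ∫ z, |h z| ∂μ := integral_const_mul m _
    have hcs : ∫ z, |h z| ∂μ ≤ (∫ z, h z ^ 2 ∂μ) ^ (1/2 : ℝ) := by
      have hpq : Real.HolderConjugate 2 2 := Real.HolderConjugate.two_two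
      have := integral_mul_le_Lp_mul_Lq_of_nonneg (μ := μ) hpq
        (f := fun z => |h z|) (g := fun _ => (1:ℝ))
        (Filter.Eventually.of_forall fun z => abs_nonneg _)
        (Filter.Eventually.of_forall fun z => zero_le_one)
        (by simpa [Real.norm_eq_abs] using hh.norm)
        (by simpa using memLp_const (1:ℝ) (μ := μ))
      simp only [mul_one] at this
      have e1 : ∫ (a : Z), |h a| ^ (2:ℝ) ∂μ = ∫ z, h z ^ 2 ∂μ :=
        integral_congr_ae (Filter.Eventually.of_forall fun z => by
          show |h z| ^ (2:ℝ) = h z ^ 2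
          rw [show ((2:ℝ)) = ((2:ℕ):ℝ) by norm_num, Real.rpow_natCast, sq_abs])
      have e2 : ∫ (a : Z), (1:ℝ) ^ (2:ℝ) ∂μ = 1 := by simp
      rw [e1, e2] at this
      simpa using this
    have habs : |∫ z, ℓ z * h z ∂μ| ≤ m * (∫ z, h z ^ 2 ∂μ) ^ (1/2:ℝ) :=
      hb.trans (mul_le_mul_of_nonneg_left hcs hm)
    have hc0 : 0 ≤ m * (∫ z, h z ^ 2 ∂μ) ^ (1/2:ℝ) :=
      mul_nonneg hm (Real.rpow_nonneg hI _)
    have := pow_le_pow_left₀ (abs_nonneg _) habs 2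
    rw [sq_abs] at this
    refine this.trans_eq ?_
    rw [mul_pow, ← Real.rpow_natCast ((∫ z, h z ^ 2 ∂μ) ^ (1/2:ℝ)) 2, ← Real.rpow_mul hI]
    norm_num
  -- J r = R ^ 2
  have hJr : J r = R ^ 2 := by
    show (∫ z, ℓ z * r z ∂μ) ^ 2 + m ^ 2 * ∫ z, (r z - r z) ^ 2 ∂μ = R ^ 2
    simp [R]
  -- lower bound for every g
  have hlow : ∀ g : {g : Z → ℝ // Measurable g ∧ MemLp g 2 μ}, (1/2) * R ^ 2 ≤ J g.1 := by
    rintro ⟨g, hgmeas, hg2⟩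
    have hrg : MemLp (fun z => r z - g z) 2 μ := by
      exact hr2.sub hg2
    have hA : Integrable (fun z => ℓ z * g z) μ := hint g hg2
    have hB : Integrable (fun z => ℓ z * (r z - g z)) μ := hint _ hrg
    have hsplit : R = (∫ z, ℓ z * g z ∂μ) + ∫ z, ℓ z * (r z - g z) ∂μ := by
      rw [← integral_add hA hB]
      exact integral_congr_ae (Filter.Eventually.of_forall fun z => by ring)
    have hB2 : (∫ z, ℓ z * (r z - g z) ∂μ) ^ 2 ≤ m ^ 2 * ∫ z, (g z - r z) ^ 2 ∂μ := by
      have := key _ hrg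
      have heq : ∫ z, (r z - g z) ^ 2 ∂μ = ∫ z, (g z - r z) ^ 2 ∂μ :=
        integral_congr_ae (Filter.Eventually.of_forall fun z => by ring)
      rwa [heq] at this
    have hR2 : R ^ 2 = ((∫ z, ℓ z * g z ∂μ) + ∫ z, ℓ z * (r z - g z) ∂μ) ^ 2 := by
      rw [hsplit]
    show (1/2) * R ^ 2 ≤ (∫ z, ℓ z * g z ∂μ) ^ 2 + m ^ 2 * ∫ z, (g z - r z) ^ 2 ∂μ
    rw [hR2]
    nlinarith [sq_nonneg ((∫ z, ℓ z * g z ∂μ) - ∫ z, ℓ z * (r z - g z) ∂μ), hB2]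
  have hbb : BddBelow (Set.range fun g : {g : Z → ℝ // Measurable g ∧ MemLp g 2 μ} => J g.1) :=
    ⟨(1/2) * R ^ 2, by rintro x ⟨g, rfl⟩; exact hlow g⟩
  haveI : Nonempty {g : Z → ℝ // Measurable g ∧ MemLp g 2 μ} := ⟨⟨r, hrmeas, hr2⟩⟩
  refine ⟨hJr, le_ciInf hlow, ?_⟩
  calc (⨅ g : {g : Z → ℝ // Measurable g ∧ MemLp g 2 μ}, J g.1) ≤ J r :=
        ciInf_le hbb ⟨r, hrmeas, hr2⟩
    _ = R ^ 2 := hJr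
end
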